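/- Property [B] fails for the Frail Fighter: for u = 0 and a(j) = 1 − (1/2)^j, there exists t > 0 (in fact, every t > 2.694…, the unique solution of (3/4)[17/8 − e^{−t}(5/4 + (3/8)(t − log(3/2)))] = (7/8)[1 + (3/4)(1 − e^{−t})]) such that K(4,t) = 3 and K(5,t) = 2; in particular K(5,t) < K(4,t). -/

import Mathlib

open Real MeasureTheory Filter Topology

/-- Auxiliary history-based recursion: `Nhist a u n m t` equals `N(m,t)` when `m ≤ n`. -/
noncomputable def Nhist (a : ℕ → ℝ) (u : ℝ) : ℕ → ℕ → ℝ → ℝ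
  | 0, _, _ => 0
  | n + 1, m, t =>
      if m ≤ n then Nhist a u n m t
      else (Finset.Icc 1 (n + 1)).sup'
          (Finset.nonempty_Icc.mpr (Nat.succ_le_succ (Nat.zero_le n)))
          (fun j => a j + (a j * (1 - u) + u) *
            (Real.exp (-t) * ∫ x in (0:ℝ)..t, Nhist a u n (n + 1 - j) x * Real.exp x))

/-- `Nval a u n t` is `N(n,t)`, the optimal expected number of enemy planes shot down,
with `N(0,t) = 0` and `N(n,t) = max_{1 ≤ j ≤ n} N_n(j,t)`. -/
noncomputable def Nval (a : ℕ → ℝ) (u : ℝ) (n : ℕ) (t : ℝ) : ℝ :=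
  Nhist a u n n t

/-- `Nstar a u r t` is `N*(r,t) = e^{-t} ∫_0^t N(r,x) e^x dx` (so `N*(0,t) = 0`). -/
noncomputable def Nstar (a : ℕ → ℝ) (u : ℝ) (r : ℕ) (t : ℝ) : ℝ :=
  Real.exp (-t) * ∫ x in (0:ℝ)..t, Nval a u r x * Real.exp x

/-- `Nalloc a u n j t` is `N_n(j,t) = a(j) + c(j)·N*(n-j,t)` where `c(j) = a(j)(1-u)+u`. -/
noncomputable def Nalloc (a : ℕ → ℝ) (u : ℝ) (n j : ℕ) (t : ℝ) : ℝ :=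
  a j + (a j * (1 - u) + u) * Nstar a u (n - j) t

/-- `Kopt a u n t = min { j ∈ {1,…,n} : N_n(j,t) = N(n,t) }`. -/
noncomputable def Kopt (a : ℕ → ℝ) (u : ℝ) (n : ℕ) (t : ℝ) : ℕ :=
  sInf {j : ℕ | 1 ≤ j ∧ j ≤ n ∧ Nalloc a u n j t = Nval a u n t}

lemma Nhist_eq (a : ℕ → ℝ) (u : ℝ) : ∀ n m, m ≤ n → ∀ t, Nhist a u n m t = Nval a u m t := by
  intro n
  induction n with
  | zero => intro m hm t; interval_cases m; rfl
  | succ n ih =>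
    intro m hm t
    rcases Nat.lt_or_ge m (n+1) with h | h
    · rw [Nhist, if_pos (Nat.lt_succ_iff.mp h)]
      exact ih m (Nat.lt_succ_iff.mp h) t
    · have : m = n + 1 := le_antisymm hm h
      subst this; rfl

lemma Nval_succ (a : ℕ → ℝ) (u : ℝ) (n : ℕ) (t : ℝ) :
    Nval a u (n+1) t = (Finset.Icc 1 (n+1)).sup'
      (Finset.nonempty_Icc.mpr (Nat.succ_le_succ (Nat.zero_le n)))
      (fun j => Nalloc a u (n+1) j t) := by
  rw [Nval, Nhist, if_neg (by omega)]
  apply Finset.sup'_congr _ rfl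
  intro j hj
  rw [Finset.mem_Icc] at hj
  have h : n + 1 - j ≤ n := by omega
  simp only [Nalloc, Nstar, Nhist_eq a u n (n+1-j) h]

lemma continuous_sup' {s : Finset ℕ} (hs : s.Nonempty) {F : ℕ → ℝ → ℝ}
    (hF : ∀ i ∈ s, Continuous (F i)) : Continuous fun t => s.sup' hs fun i => F i t := by
  induction hs using Finset.Nonempty.cons_induction with
  | singleton a =>
    simp only [Finset.sup'_singleton]
    exact hF a (by simp)
  | cons a s ha hs ih =>
    have : (fun t => (Finset.cons a s ha).sup' (Finset.cons_nonempty ha) fun i => F i t)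
        = fun t => max (F a t) (s.sup' hs fun i => F i t) := by
      funext t; exact Finset.sup'_cons hs (fun i => F i t)
    rw [this]
    exact (hF a (by simp)).max (ih (fun i hi => hF i (by simp [hi])))

lemma continuous_Nhist (a : ℕ → ℝ) (u : ℝ) : ∀ n m, Continuous fun t => Nhist a u n m t := by
  intro n
  induction n with
  | zero => intro m; simpa [Nhist] using continuous_const
  | succ n ih =>
    intro m
    by_cases h : m ≤ n
    · simp only [Nhist, if_pos h]; exact ih m
    · simp only [Nhist, if_neg h]
      apply continuous_sup' _ (fun j hj => ?_)
      have hcont : Continuous fun x => Nhist a u n (n + 1 - j) x * Real.exp x :=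
        (ih _).mul Real.continuous_exp
      have hprim : Continuous fun t => ∫ x in (0:ℝ)..t, Nhist a u n (n + 1 - j) x * Real.exp x :=
        intervalIntegral.continuous_primitive (fun c d => hcont.intervalIntegrable c d) 0
      exact continuous_const.add (continuous_const.mul
        (((Real.continuous_exp.comp continuous_neg)).mul hprim))

lemma continuous_Nval (a : ℕ → ℝ) (u : ℝ) (n : ℕ) : Continuous fun t => Nval a u n t :=
  continuous_Nhist a u n n

noncomputable def aa : ℕ → ℝ := fun j => 1 - (1/2)^j

lemma Nval_zero (a : ℕ → ℝ) (u t : ℝ) : Nval a u 0 t = 0 := rfl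

lemma Nstar_zero (a : ℕ → ℝ) (u t : ℝ) : Nstar a u 0 t = 0 := by
  simp [Nstar, Nval_zero]

lemma Nstar_of_const {a : ℕ → ℝ} {u : ℝ} {r : ℕ} (c : ℝ) (h : ∀ x, Nval a u r x = c)
    (t : ℝ) : Nstar a u r t = c * (1 - Real.exp (-t)) := by
  unfold Nstar
  simp only [h]
  rw [intervalIntegral.integral_const_mul, integral_exp, Real.exp_zero, Real.exp_neg]
  have := Real.exp_ne_zero t
  field_simp

lemma Nval_le {a : ℕ → ℝ} {u : ℝ} {n : ℕ} {t c : ℝ}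
    (h : ∀ j, 1 ≤ j → j ≤ n + 1 → Nalloc a u (n+1) j t ≤ c) : Nval a u (n+1) t ≤ c := by
  rw [Nval_succ]
  exact Finset.sup'_le _ _ (fun j hj => by rw [Finset.mem_Icc] at hj; exact h j hj.1 hj.2)

lemma le_Nval {a : ℕ → ℝ} {u : ℝ} {n j : ℕ} {t : ℝ} (h1 : 1 ≤ j) (h2 : j ≤ n + 1) :
    Nalloc a u (n+1) j t ≤ Nval a u (n+1) t := by
  rw [Nval_succ]
  exact Finset.le_sup' (fun j => Nalloc a u (n+1) j t) (Finset.mem_Icc.mpr ⟨h1, h2⟩)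

lemma Nval_eq_of {a : ℕ → ℝ} {u : ℝ} {n j₀ : ℕ} {t : ℝ} (h1 : 1 ≤ j₀) (h2 : j₀ ≤ n + 1)
    (hle : ∀ j, 1 ≤ j → j ≤ n + 1 → Nalloc a u (n+1) j t ≤ Nalloc a u (n+1) j₀ t) :
    Nval a u (n+1) t = Nalloc a u (n+1) j₀ t :=
  le_antisymm (Nval_le hle) (le_Nval h1 h2)

lemma Nval_one (t : ℝ) : Nval aa 0 1 t = 1/2 := by
  have h : Nval aa 0 1 t = Nalloc aa 0 1 1 t :=
    Nval_eq_of (n := 0) le_rfl le_rfl (by intro j hj1 hj2; interval_cases j; exact le_rfl)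
  rw [h]
  show aa 1 + (aa 1 * (1 - 0) + 0) * Nstar aa 0 (1-1) t = 1/2
  rw [show (1:ℕ)-1 = 0 from rfl, Nstar_zero]
  simp only [aa]; ring

lemma Nstar_one (t : ℝ) : Nstar aa 0 1 t = 1/2 * (1 - Real.exp (-t)) :=
  Nstar_of_const (1/2) Nval_one t

lemma alloc21 (t : ℝ) : Nalloc aa 0 2 1 t = 3/4 - 1/4 * Real.exp (-t) := by
  show aa 1 + (aa 1 * (1 - 0) + 0) * Nstar aa 0 (2-1) t = _
  rw [show (2:ℕ)-1 = 1 from rfl, Nstar_one]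
  simp only [aa]; ring

lemma alloc22 (t : ℝ) : Nalloc aa 0 2 2 t = 3/4 := by
  show aa 2 + (aa 2 * (1 - 0) + 0) * Nstar aa 0 (2-2) t = _
  rw [show (2:ℕ)-2 = 0 from rfl, Nstar_zero]
  simp only [aa]; ring

lemma Nval_two (t : ℝ) : Nval aa 0 2 t = 3/4 := by
  have h : Nval aa 0 2 t = Nalloc aa 0 2 2 t := by
    apply Nval_eq_of (n := 1) (by norm_num) le_rfl
    intro j hj1 hj2
    interval_cases j
    · rw [alloc21, alloc22]; have := Real.exp_pos (-t); linarith
    · exact le_rfl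
  rw [h, alloc22]

lemma Nstar_two (t : ℝ) : Nstar aa 0 2 t = 3/4 * (1 - Real.exp (-t)) :=
  Nstar_of_const (3/4) Nval_two t

lemma alloc31 (x : ℝ) : Nalloc aa 0 3 1 x = 7/8 - 3/8 * Real.exp (-x) := by
  show aa 1 + (aa 1 * (1 - 0) + 0) * Nstar aa 0 (3-1) x = _
  rw [show (3:ℕ)-1 = 2 from rfl, Nstar_two]
  simp only [aa]; ring

lemma alloc32 (x : ℝ) : Nalloc aa 0 3 2 x = 9/8 - 3/8 * Real.exp (-x) := by
  show aa 2 + (aa 2 * (1 - 0) + 0) * Nstar aa 0 (3-2) x = _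
  rw [show (3:ℕ)-2 = 1 from rfl, Nstar_one]
  simp only [aa]; ring

lemma alloc33 (x : ℝ) : Nalloc aa 0 3 3 x = 7/8 := by
  show aa 3 + (aa 3 * (1 - 0) + 0) * Nstar aa 0 (3-3) x = _
  rw [show (3:ℕ)-3 = 0 from rfl, Nstar_zero]
  simp only [aa]; ring

lemma Nval_three (x : ℝ) :
    Nval aa 0 3 x = max (9/8 - 3/8 * Real.exp (-x)) (7/8) := by
  have hE := Real.exp_pos (-x)
  apply le_antisymm
  · apply Nval_le (n := 2)
    intro j hj1 hj2
    interval_cases j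
    · rw [alloc31]; exact le_max_of_le_left (by linarith)
    · rw [alloc32]; exact le_max_left _ _
    · rw [alloc33]; exact le_max_right _ _
  · apply max_le
    · rw [← alloc32]; exact le_Nval (n := 2) (by norm_num) (by norm_num)
    · rw [← alloc33]; exact le_Nval (n := 2) (by norm_num) (by norm_num)

lemma expL : Real.exp (Real.log (3/2)) = 3/2 := Real.exp_log (by norm_num)

lemma expnegL : Real.exp (-Real.log (3/2)) = 2/3 := by
  rw [Real.exp_neg, expL]; norm_num

lemma L_pos : 0 < Real.log (3/2) := Real.log_pos (by norm_num)

lemma exp_neg_le_of_le {s t : ℝ} (h : s ≤ t) : Real.exp (-t) ≤ Real.exp (-s) :=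
  Real.exp_le_exp.mpr (by linarith)

lemma Nstar_three {t : ℝ} (ht : Real.log (3/2) ≤ t) :
    Nstar aa 0 3 t = 9/8 - Real.exp (-t) * (5/4 + 3/8 * (t - Real.log (3/2))) := by
  set L := Real.log (3/2) with hLdef
  have hL0 : (0:ℝ) ≤ L := L_pos.le
  have hc : Continuous fun x => Nval aa 0 3 x * Real.exp x :=
    (continuous_Nval aa 0 3).mul Real.continuous_exp
  have h1 : ∫ x in (0:ℝ)..L, Nval aa 0 3 x * Real.exp x = 7/16 := by
    have heq : Set.EqOn (fun x => Nval aa 0 3 x * Real.exp x) (fun x => 7/8 * Real.exp x)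
        (Set.uIcc 0 L) := by
      intro x hx
      rw [Set.uIcc_of_le hL0] at hx
      have hx2 : (2/3:ℝ) ≤ Real.exp (-x) := by
        rw [← expnegL]; exact exp_neg_le_of_le hx.2
      simp only [Nval_three, max_eq_right (by linarith : (9/8:ℝ) - 3/8 * Real.exp (-x) ≤ 7/8)]
    rw [intervalIntegral.integral_congr heq, intervalIntegral.integral_const_mul, integral_exp,
      Real.exp_zero, expL]
    norm_num
  have h2 : ∫ x in L..t, Nval aa 0 3 x * Real.exp x
      = 9/8 * (Real.exp t - 3/2) - 3/8 * (t - L) := by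
    have heq : Set.EqOn (fun x => Nval aa 0 3 x * Real.exp x)
        (fun x => 9/8 * Real.exp x - 3/8) (Set.uIcc L t) := by
      intro x hx
      rw [Set.uIcc_of_le ht] at hx
      have hx2 : Real.exp (-x) ≤ 2/3 := by
        rw [← expnegL]; exact exp_neg_le_of_le hx.1
      simp only [Nval_three, max_eq_left (by linarith : (7/8:ℝ) ≤ 9/8 - 3/8 * Real.exp (-x))]
      have := Real.exp_ne_zero x
      rw [Real.exp_neg]
      field_simp
    rw [intervalIntegral.integral_congr heq, intervalIntegral.integral_sub
      ((by fun_prop : Continuous fun x : ℝ => (9/8:ℝ) * Real.exp x).intervalIntegrable _ _)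
      (intervalIntegrable_const),
      intervalIntegral.integral_const_mul, integral_exp, intervalIntegral.integral_const, expL]
    simp only [smul_eq_mul]
    ring
  have hsplit : ∫ x in (0:ℝ)..t, Nval aa 0 3 x * Real.exp x
      = 9/8 * Real.exp t - 5/4 - 3/8 * (t - L) := by
    rw [← intervalIntegral.integral_add_adjacent_intervals
      (hc.intervalIntegrable 0 L) (hc.intervalIntegrable L t), h1, h2]
    ring
  rw [Nstar, hsplit]
  have := Real.exp_ne_zero t
  rw [Real.exp_neg]
  field_simp
  ring

lemma Nstar_le_of_bound {a : ℕ → ℝ} {u : ℝ} {r : ℕ} {c : ℝ}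
    (h : ∀ x, 0 ≤ x → Nval a u r x ≤ c) {t : ℝ} (ht : 0 ≤ t) :
    Nstar a u r t ≤ c * (1 - Real.exp (-t)) := by
  have hcont := continuous_Nval a u r
  have hint : (∫ x in (0:ℝ)..t, Nval a u r x * Real.exp x)
      ≤ ∫ x in (0:ℝ)..t, c * Real.exp x := by
    apply intervalIntegral.integral_mono_on ht
      ((hcont.mul Real.continuous_exp).intervalIntegrable _ _)
      ((continuous_const.mul Real.continuous_exp).intervalIntegrable _ _)
    intro x hx
    exact mul_le_mul_of_nonneg_right (h x hx.1) (Real.exp_pos x).le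
  calc Nstar a u r t ≤ Real.exp (-t) * ∫ x in (0:ℝ)..t, c * Real.exp x :=
        mul_le_mul_of_nonneg_left hint (Real.exp_pos _).le
  _ = c * (1 - Real.exp (-t)) := by
      rw [intervalIntegral.integral_const_mul, integral_exp, Real.exp_zero, Real.exp_neg]
      have := Real.exp_ne_zero t
      field_simp

lemma alloc41 {t : ℝ} (ht : Real.log (3/2) ≤ t) :
    Nalloc aa 0 4 1 t = 17/16 - Real.exp (-t) * (5/8 + 3/16 * (t - Real.log (3/2))) := by
  show aa 1 + (aa 1 * (1 - 0) + 0) * Nstar aa 0 (4-1) t = _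
  rw [show (4:ℕ)-1 = 3 from rfl, Nstar_three ht]
  simp only [aa]; ring

lemma alloc42 (t : ℝ) : Nalloc aa 0 4 2 t = 21/16 - 9/16 * Real.exp (-t) := by
  show aa 2 + (aa 2 * (1 - 0) + 0) * Nstar aa 0 (4-2) t = _
  rw [show (4:ℕ)-2 = 2 from rfl, Nstar_two]
  simp only [aa]; ring

lemma alloc43 (t : ℝ) : Nalloc aa 0 4 3 t = 21/16 - 7/16 * Real.exp (-t) := by
  show aa 3 + (aa 3 * (1 - 0) + 0) * Nstar aa 0 (4-3) t = _
  rw [show (4:ℕ)-3 = 1 from rfl, Nstar_one]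
  simp only [aa]; ring

lemma alloc44 (t : ℝ) : Nalloc aa 0 4 4 t = 15/16 := by
  show aa 4 + (aa 4 * (1 - 0) + 0) * Nstar aa 0 (4-4) t = _
  rw [show (4:ℕ)-4 = 0 from rfl, Nstar_zero]
  simp only [aa]; ring

lemma Nval_three_le (x : ℝ) (_hx : (0:ℝ) ≤ x) : Nval aa 0 3 x ≤ 9/8 := by
  rw [Nval_three]
  have := Real.exp_pos (-x)
  apply max_le <;> [linarith; norm_num]

lemma Nstar_three_le {x : ℝ} (hx : (0:ℝ) ≤ x) :
    Nstar aa 0 3 x ≤ 9/8 * (1 - Real.exp (-x)) :=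
  Nstar_le_of_bound Nval_three_le hx

lemma Nval_four_le (x : ℝ) (hx : (0:ℝ) ≤ x) : Nval aa 0 4 x ≤ 21/16 := by
  apply Nval_le (n := 3)
  intro j hj1 hj2
  have hE := Real.exp_pos (-x)
  interval_cases j
  · show aa 1 + (aa 1 * (1 - 0) + 0) * Nstar aa 0 (4-1) x ≤ 21/16
    rw [show (4:ℕ)-1 = 3 from rfl]
    have hs := Nstar_three_le hx
    simp only [aa]
    nlinarith [hs, hE]
  · rw [alloc42]; linarith
  · rw [alloc43]; linarith
  · rw [alloc44]; norm_num

lemma Nstar_four_le {t : ℝ} (ht : (0:ℝ) ≤ t) :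
    Nstar aa 0 4 t ≤ 21/16 * (1 - Real.exp (-t)) :=
  Nstar_le_of_bound Nval_four_le ht

lemma alloc51_le {t : ℝ} (ht : (0:ℝ) ≤ t) :
    Nalloc aa 0 5 1 t ≤ 37/32 - 21/32 * Real.exp (-t) := by
  show aa 1 + (aa 1 * (1 - 0) + 0) * Nstar aa 0 (5-1) t ≤ _
  rw [show (5:ℕ)-1 = 4 from rfl]
  have hs := Nstar_four_le ht
  simp only [aa]
  nlinarith [hs]

lemma alloc52 {t : ℝ} (ht : Real.log (3/2) ≤ t) :
    Nalloc aa 0 5 2 t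
      = 51/32 - Real.exp (-t) * (15/16 + 9/32 * (t - Real.log (3/2))) := by
  show aa 2 + (aa 2 * (1 - 0) + 0) * Nstar aa 0 (5-2) t = _
  rw [show (5:ℕ)-2 = 3 from rfl, Nstar_three ht]
  simp only [aa]; ring

lemma alloc53 (t : ℝ) : Nalloc aa 0 5 3 t = 49/32 - 21/32 * Real.exp (-t) := by
  show aa 3 + (aa 3 * (1 - 0) + 0) * Nstar aa 0 (5-3) t = _
  rw [show (5:ℕ)-3 = 2 from rfl, Nstar_two]
  simp only [aa]; ring

lemma alloc54 (t : ℝ) : Nalloc aa 0 5 4 t = 45/32 - 15/32 * Real.exp (-t) := by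
  show aa 4 + (aa 4 * (1 - 0) + 0) * Nstar aa 0 (5-4) t = _
  rw [show (5:ℕ)-4 = 1 from rfl, Nstar_one]
  simp only [aa]; ring

lemma alloc55 (t : ℝ) : Nalloc aa 0 5 5 t = 31/32 := by
  show aa 5 + (aa 5 * (1 - 0) + 0) * Nstar aa 0 (5-5) t = _
  rw [show (5:ℕ)-5 = 0 from rfl, Nstar_zero]
  simp only [aa]; ring

/-- The gap function whose unique positive root is the critical time. -/
noncomputable def FF (t : ℝ) : ℝ :=
  1/16 - Real.exp (-t) * (9/32) * (1 + t - Real.log (3/2))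

lemma FF_hasDerivAt (t : ℝ) :
    HasDerivAt FF (Real.exp (-t) * (9/32) * (t - Real.log (3/2))) t := by
  set L := Real.log (3/2)
  have h1 : HasDerivAt (fun s : ℝ => Real.exp (-s)) (-Real.exp (-t)) t := by
    simpa using (hasDerivAt_neg t).exp
  have h2 : HasDerivAt (fun s : ℝ => 1 + s - L) 1 t :=
    ((hasDerivAt_id t).const_add 1).sub_const L
  have h4 := ((h1.mul h2).const_mul (9/32 : ℝ)).const_sub (1/16 : ℝ)
  have hfun : FF = fun s : ℝ => 1/16 - 9/32 * (Real.exp (-s) * (1 + s - L)) := by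
    funext s; simp only [FF]; ring
  rw [hfun]
  exact h4.congr_deriv (by ring)

lemma FF_continuous : Continuous FF :=
  Differentiable.continuous (fun t => (FF_hasDerivAt t).differentiableAt)

lemma FF_strictMono : StrictMonoOn FF (Set.Ici (Real.log (3/2))) := by
  apply strictMonoOn_of_deriv_pos (convex_Ici _) FF_continuous.continuousOn
  intro x hx
  rw [interior_Ici] at hx
  rw [(FF_hasDerivAt x).deriv]
  have := Real.exp_pos (-x)
  have : (0:ℝ) < x - Real.log (3/2) := by simp only [Set.mem_Ioi] at hx; linarith
  positivity

lemma FF_anti : AntitoneOn FF (Set.Icc 0 (Real.log (3/2))) := by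
  apply antitoneOn_of_deriv_nonpos (convex_Icc _ _) FF_continuous.continuousOn
  · exact fun x _ => (FF_hasDerivAt x).differentiableAt.differentiableWithinAt
  · intro x hx
    rw [interior_Icc] at hx
    rw [(FF_hasDerivAt x).deriv]
    have h1 := (Real.exp_pos (-x)).le
    have h2 : x - Real.log (3/2) ≤ 0 := by linarith [hx.2]
    nlinarith

lemma L_le_half : Real.log (3/2) ≤ 1/2 := by
  have := Real.log_le_sub_one_of_pos (by norm_num : (0:ℝ) < 3/2)
  linarith

lemma FF_at_L : FF (Real.log (3/2)) = -(1/8) := by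
  simp only [FF, expnegL]
  ring

lemma exp_three_gt : (18:ℝ) < Real.exp 3 := by
  have h := Real.exp_one_gt_d9
  have : Real.exp 3 = Real.exp 1 * Real.exp 1 * Real.exp 1 := by
    rw [← Real.exp_add, ← Real.exp_add]; norm_num
  nlinarith

lemma FF_at_three : 0 < FF 3 := by
  have h18 := exp_three_gt
  have hE : Real.exp (-3) < 1/18 := by
    rw [Real.exp_neg, show (1:ℝ)/18 = 18⁻¹ by norm_num]
    gcongr
  have hL0 := L_pos
  have hL := L_le_half
  have he0 := Real.exp_pos (-3)
  simp only [FF]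
  nlinarith [mul_pos he0 hL0]

lemma Kopt_four {t : ℝ} (ht : Real.log (3/2) < t) : Kopt aa 0 4 t = 3 := by
  have hE := Real.exp_pos (-t)
  have hE23 : Real.exp (-t) < 2/3 := by
    rw [← expnegL]; exact Real.exp_lt_exp.mpr (by linarith)
  have hP : 0 ≤ Real.exp (-t) * (t - Real.log (3/2)) := mul_nonneg hE.le (by linarith)
  have hNv : Nval aa 0 4 t = Nalloc aa 0 4 3 t := by
    apply Nval_eq_of (n := 3) (by norm_num) (by norm_num)
    intro j hj1 hj2
    interval_cases j
    · rw [alloc41 ht.le, alloc43]; nlinarith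
    · rw [alloc42, alloc43]; linarith
    · exact le_rfl
    · rw [alloc44, alloc43]; linarith
  have hset : {j : ℕ | 1 ≤ j ∧ j ≤ 4 ∧ Nalloc aa 0 4 j t = Nval aa 0 4 t} = {3} := by
    ext j
    simp only [Set.mem_setOf_eq, Set.mem_singleton_iff]
    constructor
    · rintro ⟨h1, h2, h3⟩
      rw [hNv] at h3
      interval_cases j
      · exfalso; rw [alloc41 ht.le, alloc43] at h3; nlinarith
      · exfalso; rw [alloc42, alloc43] at h3; nlinarith
      · rfl
      · exfalso; rw [alloc44, alloc43] at h3; nlinarith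
    · rintro rfl; exact ⟨by norm_num, by norm_num, hNv.symm⟩
  rw [Kopt, hset]
  exact csInf_singleton 3

lemma Kopt_five {t : ℝ} (ht : Real.log (3/2) < t) (hFt : 0 < FF t) : Kopt aa 0 5 t = 2 := by
  have h0t : (0:ℝ) ≤ t := (lt_trans L_pos ht).le
  have hE := Real.exp_pos (-t)
  have hE23 : Real.exp (-t) < 2/3 := by
    rw [← expnegL]; exact Real.exp_lt_exp.mpr (by linarith)
  have hP : 0 ≤ Real.exp (-t) * (t - Real.log (3/2)) := mul_nonneg hE.le (by linarith)
  simp only [FF] at hFt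
  have hNv : Nval aa 0 5 t = Nalloc aa 0 5 2 t := by
    apply Nval_eq_of (n := 4) (by norm_num) (by norm_num)
    intro j hj1 hj2
    interval_cases j
    · calc Nalloc aa 0 5 1 t ≤ 37/32 - 21/32 * Real.exp (-t) := alloc51_le h0t
        _ ≤ Nalloc aa 0 5 2 t := by rw [alloc52 ht.le]; nlinarith
    · exact le_rfl
    · rw [alloc53, alloc52 ht.le]; nlinarith
    · rw [alloc54, alloc52 ht.le]; nlinarith
    · rw [alloc55, alloc52 ht.le]; nlinarith
  have h1lt : Nalloc aa 0 5 1 t < Nalloc aa 0 5 2 t := by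
    calc Nalloc aa 0 5 1 t ≤ 37/32 - 21/32 * Real.exp (-t) := alloc51_le h0t
      _ < Nalloc aa 0 5 2 t := by rw [alloc52 ht.le]; nlinarith
  have h2S : 2 ∈ {j : ℕ | 1 ≤ j ∧ j ≤ 5 ∧ Nalloc aa 0 5 j t = Nval aa 0 5 t} :=
    ⟨by norm_num, by norm_num, hNv.symm⟩
  have hle := Nat.sInf_le h2S
  have hmem := Nat.sInf_mem (⟨2, h2S⟩ : Set.Nonempty
    {j : ℕ | 1 ≤ j ∧ j ≤ 5 ∧ Nalloc aa 0 5 j t = Nval aa 0 5 t})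
  obtain ⟨hm1, hm2, hm3⟩ := hmem
  have hne : sInf {j : ℕ | 1 ≤ j ∧ j ≤ 5 ∧ Nalloc aa 0 5 j t = Nval aa 0 5 t} ≠ 1 := by
    intro h
    rw [h, hNv] at hm3
    exact absurd hm3 (ne_of_lt h1lt)
  rw [Kopt]
  omega


/-- Assertion 5.1 ([B] fails for the Frail Fighter): for `u = 0` and `a(j) = 1 - (1/2)^j`,
there is a unique `tc > 0` solving
`(3/4)[17/8 - e^{-t}(5/4 + (3/8)(t - log(3/2)))] = (7/8)[1 + (3/4)(1 - e^{-t})]`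
(numerically `tc = 2.694…`), and for every `t > tc` one has `K(4,t) = 3` and
`K(5,t) = 2`; in particular `K(5,t) < K(4,t)`. -/
theorem frail_B_fails :
    ∃ tc : ℝ, 0 < tc ∧
      (3/4 : ℝ) * (17/8 - Real.exp (-tc) * (5/4 + (3/8) * (tc - Real.log (3/2))))
        = (7/8) * (1 + (3/4) * (1 - Real.exp (-tc))) ∧
      (∀ t : ℝ, 0 < t →
        (3/4 : ℝ) * (17/8 - Real.exp (-t) * (5/4 + (3/8) * (t - Real.log (3/2))))
          = (7/8) * (1 + (3/4) * (1 - Real.exp (-t))) → t = tc) ∧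
      ∀ t : ℝ, tc < t →
        Kopt (fun j => 1 - (1/2 : ℝ) ^ j) 0 4 t = 3 ∧
        Kopt (fun j => 1 - (1/2 : ℝ) ^ j) 0 5 t = 2 ∧
        Kopt (fun j => 1 - (1/2 : ℝ) ^ j) 0 5 t < Kopt (fun j => 1 - (1/2 : ℝ) ^ j) 0 4 t := by
  obtain ⟨tc, htcm, htc0⟩ : ∃ tc ∈ Set.Icc (Real.log (3/2)) 3, FF tc = 0 := by
    have hL3 : Real.log (3/2) ≤ 3 := by linarith [L_le_half]
    have hIVT := intermediate_value_Icc hL3 FF_continuous.continuousOn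
    have h0 : (0:ℝ) ∈ Set.Icc (FF (Real.log (3/2))) (FF 3) := by
      rw [FF_at_L]; exact ⟨by norm_num, FF_at_three.le⟩
    obtain ⟨tc, hm, he⟩ := hIVT h0
    exact ⟨tc, hm, he⟩
  have htcL : Real.log (3/2) < tc := by
    rcases lt_or_eq_of_le htcm.1 with h | h
    · exact h
    · exfalso; rw [← h, FF_at_L] at htc0; norm_num at htc0
  have htc_pos : 0 < tc := lt_trans L_pos htcL
  have heqn_iff : ∀ s : ℝ,
      ((3/4 : ℝ) * (17/8 - Real.exp (-s) * (5/4 + (3/8) * (s - Real.log (3/2))))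
        = (7/8) * (1 + (3/4) * (1 - Real.exp (-s)))) ↔ FF s = 0 := by
    intro s
    simp only [FF]
    constructor <;> intro h <;> linear_combination h
  refine ⟨tc, htc_pos, (heqn_iff tc).mpr htc0, ?_, ?_⟩
  · intro t ht hteq
    have hFt0 : FF t = 0 := (heqn_iff t).mp hteq
    rcases le_or_gt t (Real.log (3/2)) with h | h
    · exfalso
      have h1 : FF t ≤ FF 0 := FF_anti ⟨le_rfl, L_pos.le⟩ ⟨ht.le, h⟩ ht.le
      have h2 : FF 0 < 0 := by
        have := L_le_half
        simp only [FF, neg_zero, Real.exp_zero]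
        nlinarith
      linarith
    · exact FF_strictMono.injOn (Set.mem_Ici.mpr h.le) (Set.mem_Ici.mpr htcL.le)
        (by rw [hFt0, htc0])
  · intro t ht
    have htL : Real.log (3/2) < t := lt_trans htcL ht
    have hFt : 0 < FF t := by
      have h := FF_strictMono (Set.mem_Ici.mpr htcL.le) (Set.mem_Ici.mpr htL.le) ht
      rw [htc0] at h
      exact h
    have h4 : Kopt aa 0 4 t = 3 := Kopt_four htL
    have h5 : Kopt aa 0 5 t = 2 := Kopt_five htL hFt
    exact ⟨h4, h5, by rw [show Kopt (fun j => 1 - (1/2 : ℝ) ^ j) 0 5 t = 2 from h5,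
      show Kopt (fun j => 1 - (1/2 : ℝ) ^ j) 0 4 t = 3 from h4]; norm_num⟩
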